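/- arXiv:quant-ph/0409121 — 3 statements merged into one kernel-verified Lean document; each statement's English description precedes it below -/
import Mathlib

section
/- For elements X and Y of a Banach algebra, exp(t(X+Y)) = lim_{n→∞} (exp(tX/n) · exp(tY/n))^n (Lie–Trotter product formula). -/
open NormedSpace Filter Topology

section Aux

lemma exp_remainder_bound {A : Type*} [NormedRing A] [NormedAlgebra ℝ A] [CompleteSpace A]
    [NormOneClass A] (x : A) :
    ‖exp x - 1 - x‖ ≤ ‖x‖ ^ 2 * Real.exp ‖x‖ := by
  set f : ℕ → A := fun n => (n.factorial⁻¹ : ℝ) • x ^ n with hf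
  have hs : Summable f := expSeries_summable' (𝕂 := ℝ) x
  have hs1 : Summable fun n => f (n + 1) := (summable_nat_add_iff 1).2 hs
  have hs2 : Summable fun n => f (n + 2) := (summable_nat_add_iff 2).2 hs
  have h0 : exp x = ∑' n, f n := by rw [exp_eq_tsum ℝ]
  have key : exp x - 1 - x = ∑' n, f (n + 2) := by
    rw [h0, hs.tsum_eq_zero_add, hs1.tsum_eq_zero_add]
    have : f 0 = 1 := by simp [hf]
    have h1 : f (0 + 1) = x := by simp [hf]
    rw [this, h1]
    abel
  rw [key]
  have hnorms : Summable fun n => ‖f (n + 2)‖ :=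
    (summable_nat_add_iff 2).2 (norm_expSeries_summable' (𝕂 := ℝ) x)
  have hb : ∀ n : ℕ, ‖f (n + 2)‖ ≤ ‖x‖ ^ 2 * (‖x‖ ^ n / n.factorial) := by
    intro n
    have : ‖f (n + 2)‖ = ((n + 2).factorial : ℝ)⁻¹ * ‖x ^ (n + 2)‖ := by
      rw [hf, norm_smul, Real.norm_eq_abs, abs_of_nonneg (by positivity)]
    rw [this]
    have h1 : ‖x ^ (n + 2)‖ ≤ ‖x‖ ^ (n + 2) := norm_pow_le' x (by omega)
    have h2 : ((n + 2).factorial : ℝ)⁻¹ ≤ (n.factorial : ℝ)⁻¹ := by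
      apply inv_anti₀ (by positivity)
      exact_mod_cast Nat.factorial_le (by omega)
    calc ((n + 2).factorial : ℝ)⁻¹ * ‖x ^ (n + 2)‖
        ≤ (n.factorial : ℝ)⁻¹ * ‖x‖ ^ (n + 2) := by
          apply mul_le_mul h2 h1 (norm_nonneg _) (by positivity)
      _ = ‖x‖ ^ 2 * (‖x‖ ^ n / n.factorial) := by ring
  calc ‖∑' n, f (n + 2)‖ ≤ ∑' n, ‖f (n + 2)‖ := norm_tsum_le_tsum_norm hnorms
    _ ≤ ∑' n, ‖x‖ ^ 2 * (‖x‖ ^ n / n.factorial) := by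
        apply Summable.tsum_le_tsum hb hnorms
        exact (Real.summable_pow_div_factorial ‖x‖).mul_left _
    _ = ‖x‖ ^ 2 * Real.exp ‖x‖ := by
        rw [tsum_mul_left, Real.exp_eq_exp_ℝ, exp_eq_tsum_div]

lemma norm_exp_le_exp {A : Type*} [NormedRing A] [NormedAlgebra ℝ A] [CompleteSpace A]
    [NormOneClass A] (x : A) : ‖exp x‖ ≤ Real.exp ‖x‖ := by
  rw [exp_eq_tsum ℝ, Real.exp_eq_exp_ℝ, exp_eq_tsum_div]
  refine (norm_tsum_le_tsum_norm (norm_expSeries_summable' (𝕂 := ℝ) x)).trans ?_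
  apply Summable.tsum_le_tsum _ (norm_expSeries_summable' (𝕂 := ℝ) x) (Real.summable_pow_div_factorial ‖x‖)
  intro n
  rw [norm_smul, Real.norm_eq_abs, abs_of_nonneg (by positivity)]
  rcases Nat.eq_zero_or_pos n with h | h
  · simp [h]
  · rw [div_eq_inv_mul]
    exact mul_le_mul_of_nonneg_left (norm_pow_le' x h) (by positivity)


lemma norm_pow_sub_pow_le' {A : Type*} [NormedRing A] [NormOneClass A]
    {p q : A} {M : ℝ} (hp : ‖p‖ ≤ M) (hq : ‖q‖ ≤ M) (hM : 1 ≤ M) (n : ℕ) :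
    ‖p ^ n - q ^ n‖ ≤ n * M ^ n * ‖p - q‖ := by
  induction n with
  | zero => simp
  | succ n ih =>
    have hM0 : (0:ℝ) ≤ M := le_trans zero_le_one hM
    have key : p ^ (n+1) - q ^ (n+1) = p ^ n * (p - q) + (p ^ n - q ^ n) * q := by
      rw [pow_succ, pow_succ]; noncomm_ring
    rw [key]
    have h1 : ‖p ^ n * (p - q)‖ ≤ M ^ n * ‖p - q‖ := by
      calc ‖p ^ n * (p - q)‖ ≤ ‖p ^ n‖ * ‖p - q‖ := norm_mul_le _ _
        _ ≤ M ^ n * ‖p - q‖ :=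
          mul_le_mul_of_nonneg_right ((norm_pow_le p n).trans
            (pow_le_pow_left₀ (norm_nonneg _) hp n)) (norm_nonneg _)
    have h2 : ‖(p ^ n - q ^ n) * q‖ ≤ n * M ^ (n+1) * ‖p - q‖ := by
      calc ‖(p ^ n - q ^ n) * q‖ ≤ ‖p ^ n - q ^ n‖ * ‖q‖ := norm_mul_le _ _
        _ ≤ (n * M ^ n * ‖p - q‖) * M := by
            apply mul_le_mul ih hq (norm_nonneg _)
            positivity
        _ = n * M ^ (n+1) * ‖p - q‖ := by ring
    calc ‖p ^ n * (p - q) + (p ^ n - q ^ n) * q‖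
        ≤ ‖p ^ n * (p - q)‖ + ‖(p ^ n - q ^ n) * q‖ := norm_add_le _ _
      _ ≤ M ^ n * ‖p - q‖ + n * M ^ (n+1) * ‖p - q‖ := add_le_add h1 h2
      _ ≤ (n+1 : ℕ) * M ^ (n+1) * ‖p - q‖ := by
          have h3 : M ^ n * ‖p - q‖ ≤ M ^ (n+1) * ‖p - q‖ :=
            mul_le_mul_of_nonneg_right (pow_le_pow_right₀ hM (Nat.le_succ n)) (norm_nonneg _)
          push_cast
          linarith

lemma exp_mul_exp_sub_exp_add {A : Type*} [NormedRing A] [NormedAlgebra ℝ A] [CompleteSpace A]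
    [NormOneClass A] (a b : A) :
    ‖exp a * exp b - exp (a + b)‖ ≤
      (‖a‖ + ‖b‖) ^ 2 * (4 + (‖a‖ + ‖b‖)) * Real.exp (‖a‖ + ‖b‖) := by
  set s : ℝ := ‖a‖ + ‖b‖ with hs
  set u : A := exp a - 1 - a with hu
  set v : A := exp b - 1 - b with hv
  set w : A := exp (a + b) - 1 - (a + b) with hw
  have key : exp a * exp b - exp (a + b) = v + a * b + a * v + u * exp b - w := by
    rw [hu, hv, hw]; noncomm_ring
  have ha : ‖a‖ ≤ s := by rw [hs]; linarith [norm_nonneg b]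
  have hb : ‖b‖ ≤ s := by rw [hs]; linarith [norm_nonneg a]
  have hs0 : 0 ≤ s := by positivity
  have hes : Real.exp ‖a‖ ≤ Real.exp s := Real.exp_le_exp.2 ha
  have hesb : Real.exp ‖b‖ ≤ Real.exp s := Real.exp_le_exp.2 hb
  have he0 : (0:ℝ) < Real.exp s := Real.exp_pos s
  have h1 : ‖v‖ ≤ s ^ 2 * Real.exp s := by
    refine (exp_remainder_bound b).trans ?_
    apply mul_le_mul (by nlinarith [norm_nonneg b]) hesb (Real.exp_pos _).le (by positivity)
  have h2 : ‖a * b‖ ≤ s ^ 2 * Real.exp s := by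
    refine (norm_mul_le a b).trans ?_
    nlinarith [norm_nonneg a, norm_nonneg b, Real.one_le_exp hs0]
  have h3 : ‖a * v‖ ≤ s ^ 3 * Real.exp s := by
    refine (norm_mul_le a v).trans ?_
    have : ‖a‖ * ‖v‖ ≤ s * (s ^ 2 * Real.exp s) :=
      mul_le_mul ha h1 (norm_nonneg _) hs0
    calc ‖a‖ * ‖v‖ ≤ s * (s ^ 2 * Real.exp s) := this
      _ = s ^ 3 * Real.exp s := by ring
  have h4 : ‖u * exp b‖ ≤ s ^ 2 * Real.exp s := by
    refine (norm_mul_le u _).trans ?_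
    have hub : ‖u‖ ≤ ‖a‖ ^ 2 * Real.exp ‖a‖ := exp_remainder_bound a
    have heb : ‖exp b‖ ≤ Real.exp ‖b‖ := norm_exp_le_exp b
    calc ‖u‖ * ‖exp b‖ ≤ (‖a‖ ^ 2 * Real.exp ‖a‖) * Real.exp ‖b‖ :=
          mul_le_mul hub heb (norm_nonneg _) (by positivity)
      _ = ‖a‖ ^ 2 * Real.exp (‖a‖ + ‖b‖) := by rw [Real.exp_add]; ring
      _ ≤ s ^ 2 * Real.exp s := by
          apply mul_le_mul_of_nonneg_right _ he0.le
          nlinarith [norm_nonneg a]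
  have h5 : ‖w‖ ≤ s ^ 2 * Real.exp s := by
    refine (exp_remainder_bound (a + b)).trans ?_
    have hab : ‖a + b‖ ≤ s := norm_add_le a b
    apply mul_le_mul (by nlinarith [norm_nonneg (a+b)]) (Real.exp_le_exp.2 hab)
      (Real.exp_pos _).le (by positivity)
  rw [key]
  calc ‖v + a * b + a * v + u * exp b - w‖
      ≤ ‖v + a * b + a * v + u * exp b‖ + ‖w‖ := norm_sub_le _ _
    _ ≤ (‖v + a * b + a * v‖ + ‖u * exp b‖) + ‖w‖ := by gcongr; exact norm_add_le _ _
    _ ≤ ((‖v + a * b‖ + ‖a * v‖) + ‖u * exp b‖) + ‖w‖ := by gcongr; exact norm_add_le _ _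
    _ ≤ (((‖v‖ + ‖a * b‖) + ‖a * v‖) + ‖u * exp b‖) + ‖w‖ := by
        gcongr; exact norm_add_le _ _
    _ ≤ s ^ 2 * (4 + s) * Real.exp s := by nlinarith

theorem trotter_aux {A : Type*} [NormedRing A] [NormedAlgebra ℝ A] [CompleteSpace A]
    [NormOneClass A] (X Y : A) (t : ℝ) :
    Tendsto (fun n : ℕ => (exp ((t / n) • X) * exp ((t / n) • Y)) ^ n)
      atTop (𝓝 (exp (t • (X + Y)))) := by
  set L : A := exp (t • (X + Y)) with hL
  set R : ℝ := |t| * (‖X‖ + ‖Y‖) with hR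
  have hR0 : 0 ≤ R := by positivity
  set D : ℝ := R ^ 2 * (4 + R) * (Real.exp R * Real.exp R) with hD
  have key : ∀ n : ℕ, 1 ≤ n →
      ‖(exp ((t / n) • X) * exp ((t / n) • Y)) ^ n - L‖ ≤ D / n := by
    intro n hn
    have hnR : (0:ℝ) < n := by exact_mod_cast hn
    set a : A := (t / n) • X with ha
    set b : A := (t / n) • Y with hb
    have hna : ‖a‖ = |t| / n * ‖X‖ := by
      rw [ha, norm_smul, Real.norm_eq_abs, abs_div, Nat.abs_cast]
    have hnb : ‖b‖ = |t| / n * ‖Y‖ := by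
      rw [hb, norm_smul, Real.norm_eq_abs, abs_div, Nat.abs_cast]
    have hsum : ‖a‖ + ‖b‖ = R / n := by rw [hna, hnb, hR]; ring
    have hRn : R / n ≤ R := by
      apply div_le_self hR0
      exact_mod_cast hn
    -- S^n = L
    have hSL : exp (a + b) ^ n = L := by
      let +nondep : NormedAlgebra ℚ A := .restrictScalars ℚ ℝ A
      rw [← exp_nsmul, hL]
      congr 1
      have : a + b = (t / n) • (X + Y) := by rw [ha, hb, smul_add]
      rw [this, ← Nat.cast_smul_eq_nsmul ℝ n _, smul_smul]
      congr 1
      field_simp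
    -- norms of the two factors
    have hexpa : ‖exp a * exp b‖ ≤ Real.exp (R / n) := by
      calc ‖exp a * exp b‖ ≤ ‖exp a‖ * ‖exp b‖ := norm_mul_le _ _
        _ ≤ Real.exp ‖a‖ * Real.exp ‖b‖ :=
            mul_le_mul (norm_exp_le_exp a) (norm_exp_le_exp b) (norm_nonneg _)
              (Real.exp_pos _).le
        _ = Real.exp (R / n) := by rw [← Real.exp_add, hsum]
    have hexpab : ‖exp (a + b)‖ ≤ Real.exp (R / n) := by
      refine (norm_exp_le_exp _).trans (Real.exp_le_exp.2 ?_)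
      calc ‖a + b‖ ≤ ‖a‖ + ‖b‖ := norm_add_le _ _
        _ = R / n := hsum
    have hM1 : (1:ℝ) ≤ Real.exp (R / n) := Real.one_le_exp (by positivity)
    have hdiff : ‖exp a * exp b - exp (a + b)‖ ≤ (R / n) ^ 2 * ((4 + R) * Real.exp R) := by
      refine (exp_mul_exp_sub_exp_add a b).trans ?_
      rw [hsum]
      have h1 : 4 + R / n ≤ 4 + R := by linarith
      have h2 : Real.exp (R / n) ≤ Real.exp R := Real.exp_le_exp.2 hRn
      have h3 : (0:ℝ) ≤ R / n := by positivity
      calc (R / n) ^ 2 * (4 + R / n) * Real.exp (R / n)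
          ≤ (R / n) ^ 2 * (4 + R) * Real.exp R := by
            apply mul_le_mul (mul_le_mul_of_nonneg_left h1 (by positivity)) h2
              (Real.exp_pos _).le (by positivity)
        _ = (R / n) ^ 2 * ((4 + R) * Real.exp R) := by ring
    have hMn : (Real.exp (R / n)) ^ n = Real.exp R := by
      rw [← Real.exp_nat_mul]
      congr 1
      field_simp
    calc ‖(exp a * exp b) ^ n - L‖
        = ‖(exp a * exp b) ^ n - exp (a + b) ^ n‖ := by rw [hSL]
      _ ≤ n * (Real.exp (R / n)) ^ n * ‖exp a * exp b - exp (a + b)‖ :=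
          norm_pow_sub_pow_le' hexpa hexpab hM1 n
      _ ≤ n * Real.exp R * ((R / n) ^ 2 * ((4 + R) * Real.exp R)) := by
          rw [hMn]
          exact mul_le_mul_of_nonneg_left hdiff (by positivity)
      _ = D / n := by
          rw [hD]
          field_simp
  have hDten : Tendsto (fun n : ℕ => D / n) atTop (𝓝 0) :=
    tendsto_const_div_atTop_nhds_zero_nat D
  have hsq : Tendsto (fun n : ℕ =>
      (exp ((t / n) • X) * exp ((t / n) • Y)) ^ n - L) atTop (𝓝 0) := by
    apply squeeze_zero_norm' _ hDten
    filter_upwards [eventually_ge_atTop 1] with n hn using key n hn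
  have := hsq.add_const L
  simpa using this

/-- Left multiplication as a ring homomorphism into continuous linear endomorphisms. -/
noncomputable def mulRingHomCLM (A : Type*) [NormedRing A] [NormedAlgebra ℝ A] :
    A →+* (A →L[ℝ] A) where
  toFun a := ContinuousLinearMap.mul ℝ A a
  map_one' := by ext x; simp
  map_mul' a b := by ext x; simp [mul_assoc]
  map_zero' := by ext x; simp
  map_add' a b := by ext x; simp [add_mul]

end Aux

/-- Lie–Trotter product formula in a Banach algebra:
`exp(t(X+Y)) = lim_{n→∞} (exp(tX/n) · exp(tY/n))^n`. -/
theorem trotter_product_formula {A : Type*} [NormedRing A] [NormedAlgebra ℝ A]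
    [CompleteSpace A] (X Y : A) (t : ℝ) :
    Tendsto (fun n : ℕ => (exp ((t / n) • X) * exp ((t / n) • Y)) ^ n)
      atTop (𝓝 (exp (t • (X + Y)))) := by
  rcases subsingleton_or_nontrivial A with h | h
  · exact tendsto_const_nhds.congr fun n => Subsingleton.elim _ _
  · set φ : A →+* (A →L[ℝ] A) := mulRingHomCLM A with hφ
    have hφc : Continuous φ := (ContinuousLinearMap.mul ℝ A).continuous
    set f : ℕ → A := fun n => (exp ((t / n) • X) * exp ((t / n) • Y)) ^ n with hf
    set L : A := exp (t • (X + Y)) with hL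
    have hsm : ∀ (c : ℝ) (x : A), φ (c • x) = c • φ x := fun c x =>
      (ContinuousLinearMap.mul ℝ A).map_smul c x
    have haux := trotter_aux (φ X) (φ Y) t
    have hcomp : ∀ n : ℕ, (exp ((t / n) • φ X) * exp ((t / n) • φ Y)) ^ n = φ (f n) := by
      intro n
      let +nondep : NormedAlgebra ℚ A := .restrictScalars ℚ ℝ A
      letI : Algebra ℚ (A →L[ℝ] A) := Algebra.compHom _ (algebraMap ℚ ℝ)
      rw [hf, map_pow, map_mul, ← hsm, ← hsm, map_exp φ hφc, map_exp φ hφc]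
    have hLφ : exp (t • (φ X + φ Y)) = φ L := by
      let +nondep : NormedAlgebra ℚ A := .restrictScalars ℚ ℝ A
      letI : Algebra ℚ (A →L[ℝ] A) := Algebra.compHom _ (algebraMap ℚ ℝ)
      rw [hL, map_exp φ hφc, hsm, map_add]
    rw [funext hcomp, hLφ] at haux
    have hlow : ∀ u : A, ‖u‖ ≤ ‖φ u‖ * ‖(1 : A)‖ := by
      intro u
      have h1 : φ u 1 = u := by simp [hφ, mulRingHomCLM]
      calc ‖u‖ = ‖φ u 1‖ := by rw [h1]
        _ ≤ ‖φ u‖ * ‖(1 : A)‖ := (φ u).le_opNorm 1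
    have h2 : Tendsto (fun n => ‖φ (f n) - φ L‖ * ‖(1 : A)‖) atTop (𝓝 0) := by
      have h3 : Tendsto (fun n => φ (f n) - φ L) atTop (𝓝 0) := by
        simpa using haux.sub_const (φ L)
      simpa using (h3.norm.mul_const ‖(1 : A)‖)
    have hsq : Tendsto (fun n => f n - L) atTop (𝓝 0) := by
      apply squeeze_zero_norm _ h2
      intro n
      rw [← map_sub]
      exact hlow _
    simpa using hsq.add_const L
end

section
/- For elements X and Y of a Banach algebra and s ≥ 0, exp(s[X,Y]) = lim_{n→∞} (exp(√(s/n) X) · exp(√(s/n) Y) · exp(−√(s/n) X) · exp(−√(s/n) Y))^n, where [X,Y] = XY − YX. -/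
open NormedSpace Filter Topology

-- slope of exp at 0
lemma exp_slope_tendsto {A : Type*} [NormedRing A] [NormedAlgebra ℝ A] [CompleteSpace A] (c : A) :
    Tendsto (fun u : ℝ => u⁻¹ • (exp (u • c) - 1)) (𝓝[≠] (0:ℝ)) (𝓝 c) := by
  have hd : HasDerivAt (fun u : ℝ => exp (u • c)) c 0 := by
    simpa using hasDerivAt_exp_smul_const (𝕂 := ℝ) c 0
  have H := hasDerivAt_iff_tendsto_slope.mp hd
  refine H.congr fun u => ?_
  simp [slope_def_module, exp_zero]

lemma norm_pow_sub_pow_le'_s1 {A : Type*} [NormedRing A] (a b : A) (B : ℝ)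
    (ha : ‖a‖ ≤ B) (hb : ‖b‖ ≤ B) : ∀ n : ℕ, ‖a ^ (n+1) - b ^ (n+1)‖ ≤ (n+1) * B ^ n * ‖a - b‖ := by
  intro n
  induction n with
  | zero => simpa using le_refl _
  | succ n ih =>
    have hB0 : 0 ≤ B := le_trans (norm_nonneg a) ha
    have key : a ^ (n+2) - b ^ (n+2) = a * (a ^ (n+1) - b ^ (n+1)) + (a - b) * b ^ (n+1) := by
      rw [mul_sub, sub_mul, ← pow_succ', ← pow_succ']
      abel
    rw [key]
    have hbp : ‖b ^ (n+1)‖ ≤ B ^ (n+1) :=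
      (norm_pow_le' b (Nat.succ_pos n)).trans (pow_le_pow_left₀ (norm_nonneg b) hb _)
    calc ‖a * (a ^ (n+1) - b ^ (n+1)) + (a - b) * b ^ (n+1)‖
        ≤ ‖a * (a ^ (n+1) - b ^ (n+1))‖ + ‖(a - b) * b ^ (n+1)‖ := norm_add_le _ _
      _ ≤ ‖a‖ * ‖a ^ (n+1) - b ^ (n+1)‖ + ‖a - b‖ * ‖b ^ (n+1)‖ := by
          gcongr <;> exact norm_mul_le _ _
      _ ≤ B * ((n+1) * B ^ n * ‖a - b‖) + ‖a - b‖ * B ^ (n+1) := by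
          gcongr
      _ = (↑(n+1)+1) * B ^ (n+1) * ‖a - b‖ := by push_cast; ring

lemma pow_sub_pow_eq {A : Type*} [Ring A] (a b : A) :
    ∀ n : ℕ, a ^ n - b ^ n = ∑ j ∈ Finset.range n, a ^ (n - 1 - j) * (a - b) * b ^ j := by
  intro n
  induction n with
  | zero => simp
  | succ n ih =>
    rw [Finset.sum_range_succ]
    have h1 : ∀ j ∈ Finset.range n, a ^ (n + 1 - 1 - j) * (a - b) * b ^ j
        = a * (a ^ (n - 1 - j) * (a - b) * b ^ j) := by
      intro j hj
      rw [Finset.mem_range] at hj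
      rw [show n + 1 - 1 - j = (n - 1 - j) + 1 by omega, pow_succ', mul_assoc, mul_assoc,
        mul_assoc]
    rw [Finset.sum_congr rfl h1, ← Finset.mul_sum, ← ih]
    have h2 : n + 1 - 1 - n = 0 := by omega
    rw [h2, pow_zero, one_mul, pow_succ', pow_succ']
    noncomm_ring

lemma norm_one_add_pow_le {A : Type*} [NormedRing A] (e : A) (k : ℕ) :
    ‖(1 + e) ^ k‖ ≤ max 1 ‖(1:A)‖ * (1 + ‖e‖) ^ k := by
  set N := max 1 ‖(1:A)‖ with hN
  have hN1 : (1:ℝ) ≤ N := le_max_left _ _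
  have hpow : ∀ m : ℕ, ‖e ^ m‖ ≤ N * ‖e‖ ^ m := by
    intro m
    cases m with
    | zero => simp only [pow_zero, mul_one]; exact le_max_right 1 _
    | succ m =>
      calc ‖e ^ (m+1)‖ ≤ ‖e‖ ^ (m+1) := norm_pow_le' e (Nat.succ_pos m)
        _ ≤ N * ‖e‖ ^ (m+1) := le_mul_of_one_le_left (by positivity) hN1
  rw [add_comm, (Commute.one_right e).add_pow]
  calc ‖∑ m ∈ Finset.range (k + 1), e ^ m * 1 ^ (k - m) * (k.choose m : A)‖
      ≤ ∑ m ∈ Finset.range (k + 1), N * ‖e‖ ^ m * (k.choose m : ℝ) := by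
        refine (norm_sum_le _ _).trans (Finset.sum_le_sum fun m _ => ?_)
        rw [one_pow, mul_one]
        calc ‖e ^ m * (k.choose m : A)‖ = ‖(k.choose m) • e ^ m‖ := by
              rw [nsmul_eq_mul, Nat.cast_comm]
          _ ≤ (k.choose m : ℝ) * ‖e ^ m‖ := by
              simpa using norm_nsmul_le (n := k.choose m) (a := e ^ m)
          _ ≤ (k.choose m : ℝ) * (N * ‖e‖ ^ m) := by
              exact mul_le_mul_of_nonneg_left (hpow m) (Nat.cast_nonneg _)
          _ = N * ‖e‖ ^ m * (k.choose m : ℝ) := by ring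
    _ = N * (1 + ‖e‖) ^ k := by
        rw [add_comm (1:ℝ) ‖e‖, add_pow ‖e‖ 1 k, Finset.mul_sum]
        exact Finset.sum_congr rfl fun m _ => by rw [one_pow]; ring

noncomputable def rho {A : Type*} [NormedRing A] [NormedAlgebra ℝ A] (Z : A) (t : ℝ) : A :=
  t⁻¹ • (exp (t • Z) - 1 - t • Z)

lemma rho_tendsto {A : Type*} [NormedRing A] [NormedAlgebra ℝ A] [CompleteSpace A] (Z : A) :
    Tendsto (rho Z) (𝓝[≠] (0:ℝ)) (𝓝 0) := by
  have h1 := (exp_slope_tendsto Z).sub_const Z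
  rw [sub_self] at h1
  refine h1.congr' ?_
  filter_upwards [self_mem_nhdsWithin] with t ht
  have ht' : t ≠ 0 := ht
  simp [rho, smul_sub, smul_smul, inv_mul_cancel₀ ht']

lemma exp_eq_rho {A : Type*} [NormedRing A] [NormedAlgebra ℝ A] (Z : A) {t : ℝ} (ht : t ≠ 0) :
    exp (t • Z) = 1 + t • Z + t • rho Z t := by
  rw [rho, smul_inv_smul₀ ht]
  abel

lemma comm_limit {A : Type*} [NormedRing A] [NormedAlgebra ℝ A] [CompleteSpace A] (X Y : A) :
    Tendsto (fun t : ℝ => (t^2)⁻¹ •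
        (exp (t • X) * exp (t • Y) * exp (-(t • X)) * exp (-(t • Y)) - 1))
      (𝓝[≠] (0:ℝ)) (𝓝 (X * Y - Y * X)) := by
  let +nondep : NormedAlgebra ℚ A := .restrictScalars ℚ ℝ A
  have hX := rho_tendsto X
  have hY := rho_tendsto Y
  have hH : Tendsto (fun t : ℝ => (t^2)⁻¹ •
      (exp (t • X) * exp (t • Y) - exp (t • Y) * exp (t • X)))
      (𝓝[≠] (0:ℝ)) (𝓝 (X * Y - Y * X)) := by
    have hlim : Tendsto (fun t : ℝ => X * Y - Y * X + (X * rho Y t - Y * rho X t)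
        + (rho X t * Y - rho Y t * X) + (rho X t * rho Y t - rho Y t * rho X t))
        (𝓝[≠] (0:ℝ)) (𝓝 (X * Y - Y * X)) := by
      have l1 : Tendsto (fun t : ℝ => X * rho Y t - Y * rho X t) (𝓝[≠] (0:ℝ)) (𝓝 0) := by
        simpa only [mul_zero, sub_self, sub_zero]
          using (tendsto_const_nhds.mul hY).sub (tendsto_const_nhds.mul hX)
      have l2 : Tendsto (fun t : ℝ => rho X t * Y - rho Y t * X) (𝓝[≠] (0:ℝ)) (𝓝 0) := by
        simpa only [zero_mul, sub_self, sub_zero]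
          using (hX.mul tendsto_const_nhds).sub (hY.mul tendsto_const_nhds)
      have l3 : Tendsto (fun t : ℝ => rho X t * rho Y t - rho Y t * rho X t)
          (𝓝[≠] (0:ℝ)) (𝓝 0) := by
        simpa only [zero_mul, mul_zero, sub_self, sub_zero] using (hX.mul hY).sub (hY.mul hX)
      have hsum := (l1.add l2).add l3
      rw [show (0:A) + 0 + 0 = 0 by abel] at hsum
      have := tendsto_const_nhds (x := X * Y - Y * X) (f := 𝓝[≠] (0:ℝ)) |>.add hsum
      rw [add_zero] at this
      refine this.congr fun t => by abel
    refine hlim.congr' ?_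
    filter_upwards [self_mem_nhdsWithin] with t ht
    have ht' : (t:ℝ) ≠ 0 := ht
    have ht2 : (t^2 : ℝ) ≠ 0 := pow_ne_zero 2 ht'
    have expand : exp (t • X) * exp (t • Y) - exp (t • Y) * exp (t • X)
        = (t^2) • (X * Y - Y * X + (X * rho Y t - Y * rho X t)
          + (rho X t * Y - rho Y t * X) + (rho X t * rho Y t - rho Y t * rho X t)) := by
      rw [exp_eq_rho X ht', exp_eq_rho Y ht']
      simp only [mul_add, add_mul, one_mul, mul_one, smul_mul_assoc, mul_smul_comm,
        smul_smul, smul_add, smul_sub, pow_two]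
      module
    rw [expand, inv_smul_smul₀ ht2]
  have hR : Tendsto (fun t : ℝ => exp (-(t • X)) * exp (-(t • Y))) (𝓝[≠] (0:ℝ)) (𝓝 1) := by
    have hc : Continuous fun t : ℝ => exp (-(t • X)) * exp (-(t • Y)) := by
      apply Continuous.mul <;>
        exact exp_continuous.comp ((continuous_id.smul continuous_const).neg)
    have h0 := (hc.tendsto 0).mono_left (nhdsWithin_le_nhds (s := {(0:ℝ)}ᶜ))
    simpa using h0
  have main := hH.mul hR
  rw [mul_one] at main
  refine main.congr' ?_
  filter_upwards [self_mem_nhdsWithin] with t ht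
  have ht' : (t:ℝ) ≠ 0 := ht
  have hinv1 : exp (t • X) * exp (-(t • X)) = 1 := by
    rw [← exp_add_of_commute ((Commute.refl (t • X)).neg_right)]
    simp
  have hinv2 : exp (t • Y) * exp (-(t • Y)) = 1 := by
    rw [← exp_add_of_commute ((Commute.refl (t • Y)).neg_right)]
    simp
  rw [smul_mul_assoc]
  congr 1
  rw [sub_mul]
  congr 1
  · noncomm_ring
  · rw [mul_assoc, ← mul_assoc (exp (t • X)), hinv1, one_mul, hinv2]

lemma chernoff {A : Type*} [NormedRing A] [NormedAlgebra ℝ A] [CompleteSpace A]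
    (a : ℕ → A) (c : A)
    (h : Tendsto (fun n : ℕ => (n : ℝ) • (a n - 1)) atTop (𝓝 c)) :
    Tendsto (fun n : ℕ => a n ^ n) atTop (𝓝 (exp c)) := by
  let +nondep : NormedAlgebra ℚ A := .restrictScalars ℚ ℝ A
  set b : ℕ → A := fun n => exp ((n:ℝ)⁻¹ • c) with hbdef
  -- inverse sequence tends to 0 within ≠ 0
  have hinv : Tendsto (fun n : ℕ => ((n:ℝ))⁻¹) atTop (𝓝[≠] (0:ℝ)) := by
    refine tendsto_nhdsWithin_of_tendsto_nhds_of_eventually_within _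
      tendsto_inv_atTop_nhds_zero_nat ?_
    filter_upwards [eventually_ge_atTop 1] with n hn
    simp only [Set.mem_compl_iff, Set.mem_singleton_iff]
    positivity
  have hb : Tendsto (fun n : ℕ => (n : ℝ) • (b n - 1)) atTop (𝓝 c) := by
    have := (exp_slope_tendsto c).comp hinv
    refine this.congr' ?_
    filter_upwards [eventually_ge_atTop 1] with n hn
    simp [Function.comp, hbdef]
  -- difference goes to zero after scaling by n
  have hd : Tendsto (fun n : ℕ => (n : ℝ) • (a n - b n)) atTop (𝓝 0) := by
    have := h.sub hb
    rw [sub_self] at this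
    refine this.congr fun n => ?_
    rw [← smul_sub]
    congr 1
    abel
  -- eventual norm bounds
  set M : ℝ := ‖c‖ + 1 with hM
  have hM0 : (0:ℝ) ≤ M := by positivity
  have hea : ∀ᶠ n : ℕ in atTop, ‖a n - 1‖ ≤ M / n := by
    filter_upwards [h.norm.eventually_lt_const (lt_add_one ‖c‖), eventually_ge_atTop 1]
      with n h1 hn
    have hn0 : (0:ℝ) < n := by exact_mod_cast hn
    rw [norm_smul, Real.norm_natCast] at h1
    rw [le_div_iff₀ hn0, mul_comm]
    exact h1.le
  have heb : ∀ᶠ n : ℕ in atTop, ‖b n - 1‖ ≤ M / n := by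
    filter_upwards [hb.norm.eventually_lt_const (lt_add_one ‖c‖), eventually_ge_atTop 1]
      with n h1 hn
    have hn0 : (0:ℝ) < n := by exact_mod_cast hn
    rw [norm_smul, Real.norm_natCast] at h1
    rw [le_div_iff₀ hn0, mul_comm]
    exact h1.le
  -- uniform power bound
  set N : ℝ := max 1 ‖(1:A)‖ with hN
  have hN0 : (0:ℝ) ≤ N := le_trans zero_le_one (le_max_left _ _)
  set K : ℝ := N * Real.exp M with hK
  have hK0 : (0:ℝ) ≤ K := mul_nonneg hN0 (Real.exp_nonneg M)
  have hpowbound : ∀ (x : A) (n k : ℕ), 1 ≤ n → k ≤ n → ‖x - 1‖ ≤ M / n → ‖x ^ k‖ ≤ K := by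
    intro x n k hn hk hx
    have hn0 : (0:ℝ) < n := by exact_mod_cast hn
    have h1 : ‖x ^ k‖ ≤ N * (1 + ‖x - 1‖) ^ k := by
      have := norm_one_add_pow_le (x - 1) k
      simpa using this
    refine h1.trans ?_
    rw [hK]
    gcongr
    have e1 : 1 + M / n ≤ Real.exp (M / n) := by
      have := Real.add_one_le_exp (M / n); linarith
    have hMn : (0:ℝ) ≤ M / n := by positivity
    calc (1 + ‖x - 1‖) ^ k ≤ (1 + M / n) ^ k := by
          gcongr
      _ ≤ Real.exp (M / n) ^ k := pow_le_pow_left₀ (by positivity) e1 k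
      _ = Real.exp (k * (M / n)) := (Real.exp_nat_mul _ k).symm
      _ ≤ Real.exp M := by
          rw [Real.exp_le_exp]
          calc (k:ℝ) * (M / n) ≤ (n:ℝ) * (M / n) := by
                gcongr
            _ = M := by field_simp
  -- main estimate
  have key : ∀ᶠ n : ℕ in atTop, ‖a n ^ n - exp c‖ ≤ K * K * ‖(n:ℝ) • (a n - b n)‖ := by
    filter_upwards [hea, heb, eventually_ge_atTop 1] with n ha' hb' hn
    have hn0 : (0:ℝ) < n := by exact_mod_cast hn
    have hbn : (b n) ^ n = exp c := by
      rw [hbdef, ← exp_nsmul, ← Nat.cast_smul_eq_nsmul ℝ, smul_smul,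
        mul_inv_cancel₀ (ne_of_gt hn0), one_smul]
    rw [← hbn]
    have hKa : ∀ k ≤ n, ‖a n ^ k‖ ≤ K := fun k hk => hpowbound (a n) n k hn hk ha'
    have hKb : ∀ k ≤ n, ‖b n ^ k‖ ≤ K := fun k hk => hpowbound (b n) n k hn hk hb'
    calc ‖a n ^ n - b n ^ n‖
        = ‖∑ j ∈ Finset.range n, a n ^ (n - 1 - j) * (a n - b n) * b n ^ j‖ := by
          rw [pow_sub_pow_eq]
      _ ≤ ∑ j ∈ Finset.range n, K * ‖a n - b n‖ * K := by
          refine (norm_sum_le _ _).trans (Finset.sum_le_sum fun j hj => ?_)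
          rw [Finset.mem_range] at hj
          calc ‖a n ^ (n - 1 - j) * (a n - b n) * b n ^ j‖
              ≤ ‖a n ^ (n - 1 - j) * (a n - b n)‖ * ‖b n ^ j‖ := norm_mul_le _ _
            _ ≤ ‖a n ^ (n - 1 - j)‖ * ‖a n - b n‖ * ‖b n ^ j‖ := by
                gcongr; exact norm_mul_le _ _
            _ ≤ K * ‖a n - b n‖ * K := by
                gcongr
                · exact hKa _ (by omega)
                · exact hKb _ (by omega)
      _ = K * K * ((n:ℝ) * ‖a n - b n‖) := by
          rw [Finset.sum_const, Finset.card_range]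
          simp [nsmul_eq_mul]
          ring
      _ = K * K * ‖(n:ℝ) • (a n - b n)‖ := by
          rw [norm_smul, Real.norm_natCast]
  -- squeeze
  have hlim : Tendsto (fun n : ℕ => ‖a n ^ n - exp c‖) atTop (𝓝 0) := by
    have h2 : Tendsto (fun n : ℕ => K * K * ‖(n:ℝ) • (a n - b n)‖) atTop (𝓝 0) := by
      have := (hd.norm).const_mul (K * K)
      simpa using this
    exact squeeze_zero' (Eventually.of_forall fun n => norm_nonneg _) key h2
  have h3 : Tendsto (fun n : ℕ => a n ^ n - exp c) atTop (𝓝 0) :=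
    tendsto_zero_iff_norm_tendsto_zero.mpr hlim
  exact tendsto_sub_nhds_zero_iff.mp h3


/-- Commutator Trotter formula in a Banach algebra: for `s ≥ 0`,
`exp(s[X,Y]) = lim_{n→∞} (exp(√(s/n)X) exp(√(s/n)Y) exp(−√(s/n)X) exp(−√(s/n)Y))^n`. -/
theorem trotter_commutator_formula {A : Type*} [NormedRing A] [NormedAlgebra ℝ A]
    [CompleteSpace A] (X Y : A) (s : ℝ) (hs : 0 ≤ s) :
    Tendsto (fun n : ℕ =>
        (exp (Real.sqrt (s / n) • X) * exp (Real.sqrt (s / n) • Y) *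
          exp (-(Real.sqrt (s / n) • X)) * exp (-(Real.sqrt (s / n) • Y))) ^ n)
      atTop (𝓝 (exp (s • (X * Y - Y * X)))) := by
  by_cases hs0 : s = 0
  · subst hs0
    simp only [zero_div, Real.sqrt_zero, zero_smul, exp_zero, neg_zero, mul_one, one_pow]
    exact tendsto_const_nhds
  have hs' : 0 < s := hs.lt_of_ne (Ne.symm hs0)
  apply chernoff
  have htend : Tendsto (fun n : ℕ => Real.sqrt (s / n)) atTop (𝓝[≠] (0:ℝ)) := by
    refine tendsto_nhdsWithin_of_tendsto_nhds_of_eventually_within _ ?_ ?_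
    · have h1 : Tendsto (fun n : ℕ => s / (n:ℝ)) atTop (𝓝 0) :=
        tendsto_const_nhds.div_atTop tendsto_natCast_atTop_atTop
      have h2 := (Real.continuous_sqrt.tendsto 0).comp h1
      rw [Real.sqrt_zero] at h2
      exact h2
    · filter_upwards [eventually_ge_atTop 1] with n hn
      have hn0 : (0:ℝ) < n := by exact_mod_cast hn
      have : (0:ℝ) < Real.sqrt (s / n) := Real.sqrt_pos.mpr (div_pos hs' hn0)
      exact this.ne'
  have hG := (comm_limit X Y).comp htend
  have hsm := hG.const_smul s
  refine hsm.congr' ?_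
  filter_upwards [eventually_ge_atTop 1] with n hn
  have hn0 : (0:ℝ) < n := by exact_mod_cast hn
  have h2 : Real.sqrt (s / n) ^ 2 = s / n := Real.sq_sqrt (div_nonneg hs hn0.le)
  simp only [Function.comp_apply]
  rw [h2, smul_smul]
  congr 1
  field_simp
end

section
/- In a Banach algebra, the map t ↦ exp(tA)·exp(tB)·exp(−tA)·exp(−tB) equals 1 + t²[A,B] + o(t²) as t → 0; i.e., lim_{t→0} (exp(tA)exp(tB)exp(−tA)exp(−tB) − 1 − t²[A,B]) / t² = 0. -/
open NormedSpace Filter Topology Asymptotics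

section Aux
variable {A : Type*} [NormedRing A] [NormedAlgebra ℝ A] [CompleteSpace A]

noncomputable def expQ (Z : A) (t : ℝ) : A := 1 + t • Z + t ^ 2 • ((2 : ℝ)⁻¹ • (Z * Z))

theorem exp_taylor2 (Z : A) :
    (fun t : ℝ => NormedSpace.exp (t • Z) - expQ Z t) =o[𝓝 0] fun t => t ^ 2 := by
  set p : FormalMultilinearSeries ℝ ℝ A :=
    fun n => ContinuousMultilinearMap.mkPiRing ℝ (Fin n) (((n.factorial : ℝ))⁻¹ • Z ^ n) with hpdef
  have hp : HasFPowerSeriesAt (fun t : ℝ => NormedSpace.exp (t • Z)) p 0 := by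
    rw [hasFPowerSeriesAt_iff]
    filter_upwards with t
    have h := exp_series_hasSum_exp' (𝕂 := ℝ) (t • Z)
    convert h using 2 with n
    · rfl
    · simp only [hpdef, FormalMultilinearSeries.coeff, ContinuousMultilinearMap.mkPiRing_apply,
        Finset.prod_const, Finset.card_univ, Fintype.card_fin, smul_pow, smul_smul]
      simp [mul_comm]
    · simp
  have h3 := hp.isBigO_sub_partialSum_pow 3
  have h3' : (fun t : ℝ => NormedSpace.exp (t • Z) - expQ Z t) =O[𝓝 0] fun t => ‖t‖ ^ 3 := by
    refine h3.congr' ?_ (by rfl)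
    filter_upwards with t
    simp [FormalMultilinearSeries.partialSum, Finset.sum_range_succ, hpdef, expQ,
      pow_succ, smul_smul]
  have ho : (fun t : ℝ => ‖t‖ ^ 3) =o[𝓝 (0:ℝ)] fun t => t ^ 2 := by
    have h1 : (fun t : ℝ => ‖t‖ * t ^ 2) =o[𝓝 (0:ℝ)] fun t => 1 * t ^ 2 :=
      IsLittleO.mul_isBigO ((isLittleO_one_iff ℝ).2 tendsto_norm_zero) (isBigO_refl _ _)
    have he : ∀ t : ℝ, ‖t‖ * t ^ 2 = ‖t‖ ^ 3 := fun t => by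
      rw [Real.norm_eq_abs, ← sq_abs t, ← pow_succ']
    exact h1.congr he fun t => one_mul _
  exact h3'.trans_isLittleO ho

theorem expQ_bigO_one (Z : A) : (fun t : ℝ => expQ Z t) =O[𝓝 0] (fun _ => (1:ℝ)) := by
  have : Continuous fun t : ℝ => expQ Z t := by unfold expQ; fun_prop
  exact (this.tendsto 0).isBigO_one ℝ

theorem exp_bigO_one (Z : A) : (fun t : ℝ => NormedSpace.exp (t • Z)) =O[𝓝 0] (fun _ => (1:ℝ)) := by
  let +nondep : NormedAlgebra ℚ A := .restrictScalars ℚ ℝ A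
  have : Continuous fun t : ℝ => NormedSpace.exp (t • Z) :=
    exp_continuous.comp (continuous_id.smul continuous_const)
  exact (this.tendsto 0).isBigO_one ℝ

theorem expB (X Y : A) :
    (fun t : ℝ => NormedSpace.exp (t • X) * NormedSpace.exp (t • Y) - expQ X t * expQ Y t)
      =o[𝓝 0] fun t => t ^ 2 := by
  have h1 : (fun t : ℝ => (NormedSpace.exp (t • X) - expQ X t) * NormedSpace.exp (t • Y))
      =o[𝓝 0] fun t => t ^ 2 :=
    ((exp_taylor2 X).mul_isBigO (exp_bigO_one Y)).congr_right fun t => mul_one _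
  have h2 : (fun t : ℝ => expQ X t * (NormedSpace.exp (t • Y) - expQ Y t))
      =o[𝓝 0] fun t => t ^ 2 :=
    ((expQ_bigO_one X).mul_isLittleO (exp_taylor2 Y)).congr_right fun t => one_mul _
  refine (h1.add h2).congr_left fun t => ?_
  noncomm_ring

theorem expC (X Y : A) :
    (fun t : ℝ => expQ X t * expQ Y t - expQ Y t * expQ X t - t ^ 2 • (X * Y - Y * X))
      =o[𝓝 0] fun t => t ^ 2 := by
  set r : ℝ → A := fun t =>
    (2⁻¹ : ℝ) • (X * (Y * Y) - Y * Y * X + (X * X * Y - Y * (X * X))) +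
      t • ((4⁻¹ : ℝ) • (X * X * (Y * Y) - Y * Y * (X * X))) with hrdef
  have hid : ∀ t : ℝ,
      expQ X t * expQ Y t - expQ Y t * expQ X t - t ^ 2 • (X * Y - Y * X) = t ^ 3 • r t := by
    intro t
    simp only [expQ, hrdef, mul_add, add_mul, smul_add, smul_sub, sub_eq_add_neg,
      smul_smul, mul_smul_comm, smul_mul_assoc, mul_assoc, one_mul, mul_one]
    module
  have hr : (fun t : ℝ => t ^ 3 • r t) =O[𝓝 0] fun t => t ^ 3 := by
    have hc : Continuous r := by unfold r; fun_prop
    have := (isBigO_refl (fun t : ℝ => t ^ 3) (𝓝 0)).smul ((hc.tendsto 0).isBigO_one ℝ)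
    simpa using this
  have h3 : (fun t : ℝ => t ^ 3) =o[𝓝 (0:ℝ)] fun t => t ^ 2 := by
    have h1 : (fun t : ℝ => t * t ^ 2) =o[𝓝 (0:ℝ)] fun t => 1 * t ^ 2 :=
      IsLittleO.mul_isBigO ((isLittleO_one_iff ℝ).2 tendsto_id) (isBigO_refl _ _)
    exact h1.congr (fun t => (pow_succ' t 2).symm) fun t => one_mul _
  exact (((hr.trans_isLittleO h3).congr_left fun t => (hid t).symm))

theorem expD (X Y : A) :
    (fun t : ℝ => NormedSpace.exp (t • X) * NormedSpace.exp (t • Y) - NormedSpace.exp (t • Y) * NormedSpace.exp (t • X)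
        - t ^ 2 • (X * Y - Y * X)) =o[𝓝 0] fun t => t ^ 2 := by
  have := ((expB X Y).sub (expB Y X)).add (expC X Y)
  refine this.congr_left fun t => ?_
  abel

lemma grp_id {A : Type*} [Ring A] (a b a' b' c : A) (ha : a * a' = 1) (hb : b * b' = 1) :
    a * b * a' * b' - 1 - c = (a * b - b * a - c) * (a' * b') + c * (a' * b' - 1) := by
  have h1 : b * a * (a' * b') = 1 := by
    calc b * a * (a' * b') = b * (a * a') * b' := by noncomm_ring
    _ = 1 := by rw [ha, mul_one, hb]
  have h2 : a * b * (a' * b') = a * b * a' * b' := by rw [← mul_assoc]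
  calc a * b * a' * b' - 1 - c = a * b * (a' * b') - b * a * (a' * b') - c * (a' * b') +
        (c * (a' * b') - c * 1) := by rw [h1, h2, mul_one]; abel
    _ = (a * b - b * a - c) * (a' * b') + c * (a' * b' - 1) := by noncomm_ring


end Aux


/-- In a Banach algebra, the group commutator of exponentials satisfies
`exp(tA)exp(tB)exp(−tA)exp(−tB) = 1 + t²[A,B] + o(t²)` as `t → 0`. -/
theorem exp_group_commutator_second_order {A : Type*} [NormedRing A]
    [NormedAlgebra ℝ A] [CompleteSpace A] (X Y : A) :
    Tendsto (fun t : ℝ => (t ^ 2)⁻¹ •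
        (NormedSpace.exp (t • X) * NormedSpace.exp (t • Y) * NormedSpace.exp (-(t • X)) * NormedSpace.exp (-(t • Y)) -
          1 - (t ^ 2) • (X * Y - Y * X)))
      (𝓝[≠] (0 : ℝ)) (𝓝 0) := by
  set c : A := X * Y - Y * X with hc
  have hinv : ∀ (Z : A) (t : ℝ), NormedSpace.exp (t • Z) * NormedSpace.exp (-(t • Z)) = 1 := fun Z t => by
    let +nondep : NormedAlgebra ℚ A := .restrictScalars ℚ ℝ A
    rw [← exp_add_of_commute ((Commute.refl (t • Z)).neg_right)]
    simp
  have hid : ∀ t : ℝ,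
      NormedSpace.exp (t • X) * NormedSpace.exp (t • Y) * NormedSpace.exp (-(t • X)) * NormedSpace.exp (-(t • Y)) - 1 - t ^ 2 • c =
        (NormedSpace.exp (t • X) * NormedSpace.exp (t • Y) - NormedSpace.exp (t • Y) * NormedSpace.exp (t • X) - t ^ 2 • c) *
          (NormedSpace.exp (-(t • X)) * NormedSpace.exp (-(t • Y))) +
        t ^ 2 • (c * (NormedSpace.exp (-(t • X)) * NormedSpace.exp (-(t • Y)) - 1)) := by
    intro t
    rw [grp_id _ _ _ _ (t ^ 2 • c) (hinv X t) (hinv Y t), smul_mul_assoc]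
  have hbO : (fun t : ℝ => NormedSpace.exp (-(t • X)) * NormedSpace.exp (-(t • Y))) =O[𝓝 0] (fun _ => (1:ℝ)) := by
    let +nondep : NormedAlgebra ℚ A := .restrictScalars ℚ ℝ A
    have hcont : Continuous fun t : ℝ => NormedSpace.exp (-(t • X)) * NormedSpace.exp (-(t • Y))  :=
      ((exp_continuous.comp ((continuous_id.smul continuous_const).neg)).mul
        (exp_continuous.comp ((continuous_id.smul continuous_const).neg)))
    exact (hcont.tendsto 0).isBigO_one ℝ
  have h1 : (fun t : ℝ =>
      (NormedSpace.exp (t • X) * NormedSpace.exp (t • Y) - NormedSpace.exp (t • Y) * NormedSpace.exp (t • X) - t ^ 2 • c) *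
        (NormedSpace.exp (-(t • X)) * NormedSpace.exp (-(t • Y)))) =o[𝓝 0] fun t => t ^ 2 :=
    ((expD X Y).mul_isBigO hbO).congr_right fun t => mul_one _
  have h2 : (fun t : ℝ => t ^ 2 • (c * (NormedSpace.exp (-(t • X)) * NormedSpace.exp (-(t • Y)) - 1)))
      =o[𝓝 0] fun t => t ^ 2 := by
    have htend : Tendsto (fun t : ℝ => c * (NormedSpace.exp (-(t • X)) * NormedSpace.exp (-(t • Y)) - 1))
        (𝓝 0) (𝓝 0) := by
      let +nondep : NormedAlgebra ℚ A := .restrictScalars ℚ ℝ A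
      have hcont : Continuous fun t : ℝ => c * (NormedSpace.exp (-(t • X)) * NormedSpace.exp (-(t • Y)) - 1) :=
        continuous_const.mul (((exp_continuous.comp
          ((continuous_id.smul continuous_const).neg)).mul
          (exp_continuous.comp ((continuous_id.smul continuous_const).neg))).sub
          continuous_const)
      have := hcont.tendsto 0
      simpa using this
    have := (isBigO_refl (fun t : ℝ => t ^ 2) (𝓝 0)).smul_isLittleO
      ((isLittleO_one_iff ℝ).2 htend)
    simpa using this
  have hG : (fun t : ℝ =>
      NormedSpace.exp (t • X) * NormedSpace.exp (t • Y) * NormedSpace.exp (-(t • X)) * NormedSpace.exp (-(t • Y)) - 1 - t ^ 2 • c)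
      =o[𝓝 0] fun t => t ^ 2 := (h1.add h2).congr_left fun t => (hid t).symm
  exact hG.tendsto_inv_smul_nhds_zero.mono_left nhdsWithin_le_nhds
end
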